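/- Let γ₁₁, γ₁₂, γ₂₂ : ℝ² → ℝ be differentiable with γ(x) ≠ 0 for all x (γ := γ₁₁γ₂₂ − γ₁₂²), let h : ℝ² → ℝ be differentiable, and let g ∈ ℝ. Then the covariant divergence of the pressure tensor P^{ij} := ½ g h² γ^{ij} reduces to a pure gradient term: for each i ∈ {1,2} and every point x₀, Σ_j ∂_j(½ g h² γ^{ij}) + Σ_{j,k} Γ^i_{jk} (½ g h² γ^{kj}) + Σ_{j,k} Γ^j_{jk} (½ g h² γ^{ik}) = g h Σ_j γ^{ij} ∂_j h at x₀. -/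

import Mathlib

open Real

noncomputable section

/-- Partial derivative in direction `j` (j = 0 ↦ ∂₁, j = 1 ↦ ∂₂) of a scalar
function on ℝ². -/
def pd (j : Fin 2) (f : ℝ × ℝ → ℝ) (x : ℝ × ℝ) : ℝ :=
  fderiv ℝ f x (if j = 0 then ((1 : ℝ), (0 : ℝ)) else ((0 : ℝ), (1 : ℝ)))

/-- Covariant components of the symmetric metric tensor (γ₂₁ = γ₁₂). -/
def gcov (g11 g12 g22 : ℝ × ℝ → ℝ) : Fin 2 → Fin 2 → ℝ × ℝ → ℝ :=
  fun i j => !![g11, g12; g12, g22] i j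

/-- Determinant γ = γ₁₁γ₂₂ − γ₁₂² of the metric. -/
def gdet (g11 g12 g22 : ℝ × ℝ → ℝ) (x : ℝ × ℝ) : ℝ :=
  g11 x * g22 x - g12 x ^ 2

/-- Contravariant (inverse) components of the metric:
γ^{11} = γ₂₂/γ, γ^{12} = γ^{21} = −γ₁₂/γ, γ^{22} = γ₁₁/γ. -/
def gcon (g11 g12 g22 : ℝ × ℝ → ℝ) : Fin 2 → Fin 2 → ℝ × ℝ → ℝ :=
  fun i j =>
    !![fun x => g22 x / gdet g11 g12 g22 x,
       fun x => -g12 x / gdet g11 g12 g22 x;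
       fun x => -g12 x / gdet g11 g12 g22 x,
       fun x => g11 x / gdet g11 g12 g22 x] i j

/-- Christoffel symbols
Γ^i_{jk} = ½ Σ_m γ^{im} (∂_j γ_{km} + ∂_k γ_{jm} − ∂_m γ_{jk}). -/
def Gamma (g11 g12 g22 : ℝ × ℝ → ℝ) (i j k : Fin 2) (x : ℝ × ℝ) : ℝ :=
  (1 / 2) * ∑ m : Fin 2, gcon g11 g12 g22 i m x *
    (pd j (gcov g11 g12 g22 k m) x + pd k (gcov g11 g12 g22 j m) x
      - pd m (gcov g11 g12 g22 j k) x)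

lemma pd_mul {f u : ℝ × ℝ → ℝ} {x} (hf : DifferentiableAt ℝ f x)
    (hu : DifferentiableAt ℝ u x) (j : Fin 2) :
    pd j (fun y => f y * u y) x = pd j f x * u x + f x * pd j u x := by
  unfold pd; rw [fderiv_fun_mul hf hu]; simp; ring

lemma pd_inv {u : ℝ × ℝ → ℝ} {x} (hu : DifferentiableAt ℝ u x) (hu0 : u x ≠ 0) (j : Fin 2) :
    pd j (fun y => (u y)⁻¹) x = -(pd j u x) / (u x) ^ 2 := by
  unfold pd
  have h2 := ((hasFDerivAt_inv hu0).comp x hu.hasFDerivAt).fderiv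
  rw [show (fun y => (u y)⁻¹) = (fun x : ℝ => x⁻¹) ∘ u from rfl, h2]; simp; ring

lemma pd_div {f u : ℝ × ℝ → ℝ} {x} (hf : DifferentiableAt ℝ f x)
    (hu : DifferentiableAt ℝ u x) (hu0 : u x ≠ 0) (j : Fin 2) :
    pd j (fun y => f y / u y) x
      = (pd j f x * u x - f x * pd j u x) / (u x) ^ 2 := by
  have : (fun y => f y / u y) = fun y => f y * (u y)⁻¹ := by
    funext y; rw [div_eq_mul_inv]
  rw [this, pd_mul (u := fun y => (u y)⁻¹) hf (hu.inv hu0) j, pd_inv hu hu0 j]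
  field_simp; ring

lemma pd_const_sq {f : ℝ × ℝ → ℝ} {x} (c : ℝ) (hf : DifferentiableAt ℝ f x) (j : Fin 2) :
    pd j (fun y => c * f y ^ 2) x = c * (2 * f x * pd j f x) := by
  have h1 : (fun y => c * f y ^ 2) = fun y => (fun z => (c : ℝ)) y * (fun z => f z * f z) y := by
    funext y; ring
  rw [h1, pd_mul (u := fun z => f z * f z) (differentiableAt_const c) (hf.mul hf) j, pd_mul hf hf j]
  have : pd j (fun _ => c) x = 0 := by unfold pd; simp
  rw [this]; ring

lemma pd_neg {f : ℝ × ℝ → ℝ} {x} (hf : DifferentiableAt ℝ f x) (j : Fin 2) :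
    pd j (fun y => -f y) x = -pd j f x := by
  unfold pd; rw [fderiv_fun_neg]; simp

lemma diffAt_div {u v : ℝ × ℝ → ℝ} {x} (hu : DifferentiableAt ℝ u x)
    (hv : DifferentiableAt ℝ v x) (hv0 : v x ≠ 0) :
    DifferentiableAt ℝ (fun y => u y / v y) x := by
  have : (fun y => u y / v y) = fun y => u y * (v y)⁻¹ := by funext y; rw [div_eq_mul_inv]
  rw [this]; exact hu.mul (hv.inv hv0)

lemma pd_press {h u v : ℝ × ℝ → ℝ} {x} (c : ℝ) (hh : DifferentiableAt ℝ h x)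
    (hu : DifferentiableAt ℝ u x) (hv : DifferentiableAt ℝ v x) (hv0 : v x ≠ 0) (j : Fin 2) :
    pd j (fun y => c * h y ^ 2 * (u y / v y)) x
      = c * (2 * h x * pd j h x) * (u x / v x)
        + c * h x ^ 2 * ((pd j u x * v x - u x * pd j v x) / (v x) ^ 2) := by
  have h1 : (fun y => c * h y ^ 2 * (u y / v y))
      = fun y => (fun z => c * h z ^ 2) y * (fun z => u z / v z) y := rfl
  rw [h1, pd_mul (f := fun z => c * h z ^ 2) ((hh.pow 2).const_mul c) (diffAt_div hu hv hv0) j, pd_div hu hv hv0 j,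
    pd_const_sq c hh j]

set_option maxHeartbeats 4000000 in
/-- the covariant divergence of the pressure tensor
P^{ij} = ½ g h² γ^{ij} reduces to the pure gradient term g h γ^{ij} ∂_j h. -/
theorem covariant_divergence_pressure (g11 g12 g22 h : ℝ × ℝ → ℝ) (g : ℝ)
    (h11 : Differentiable ℝ g11) (h12 : Differentiable ℝ g12)
    (h22 : Differentiable ℝ g22) (hh : Differentiable ℝ h)
    (hγ : ∀ x, gdet g11 g12 g22 x ≠ 0) :
    ∀ (i : Fin 2) (x₀ : ℝ × ℝ),
      (∑ j : Fin 2,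
          pd j (fun y => (1 / 2) * g * h y ^ 2 * gcon g11 g12 g22 i j y) x₀)
        + (∑ j : Fin 2, ∑ k : Fin 2, Gamma g11 g12 g22 i j k x₀ *
            ((1 / 2) * g * h x₀ ^ 2 * gcon g11 g12 g22 k j x₀))
        + (∑ j : Fin 2, ∑ k : Fin 2, Gamma g11 g12 g22 j j k x₀ *
            ((1 / 2) * g * h x₀ ^ 2 * gcon g11 g12 g22 i k x₀))
      = g * h x₀ * ∑ j : Fin 2, gcon g11 g12 g22 i j x₀ * pd j h x₀ := by
  intro i x₀
  have hDeq : gdet g11 g12 g22 = fun y => g11 y * g22 y - g12 y ^ 2 := rfl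
  have hD : DifferentiableAt ℝ (gdet g11 g12 g22) x₀ := by
    rw [hDeq]; exact ((h11 x₀).mul (h22 x₀)).sub ((h12 x₀).pow 2)
  have hD0 : gdet g11 g12 g22 x₀ ≠ 0 := hγ x₀
  have hgD : ∀ j : Fin 2, pd j (gdet g11 g12 g22) x₀
      = pd j g11 x₀ * g22 x₀ + g11 x₀ * pd j g22 x₀ - 2 * g12 x₀ * pd j g12 x₀ := by
    intro j
    rw [hDeq]
    have h1 : (fun y => g11 y * g22 y - g12 y ^ 2)
        = fun y => (fun z => g11 z * g22 z) y + (fun z => -(1 : ℝ) * g12 z ^ 2) y := by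
      funext y; ring
    rw [h1]
    unfold pd
    rw [fderiv_fun_add (f := fun z => g11 z * g22 z) (g := fun z => -(1:ℝ) * g12 z ^ 2) ((h11 x₀).mul (h22 x₀)) (((h12 x₀).pow 2).const_mul (-1))]
    simp only [ContinuousLinearMap.add_apply]
    have e1 := pd_mul (h11 x₀) (h22 x₀) j
    have e2 := pd_const_sq (-1 : ℝ) (h12 x₀) j
    unfold pd at e1 e2
    rw [e1, e2]; ring
  have hneg : ∀ j : Fin 2, pd j (fun y => -g12 y) x₀ = -pd j g12 x₀ := fun j => pd_neg (h12 x₀) j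
  fin_cases i <;>
  · simp only [Fin.sum_univ_two, _root_.Gamma, gcov, gcon, Fin.mk_zero, Fin.mk_one,
      Matrix.cons_val', Matrix.cons_val_zero, Matrix.cons_val_one, Matrix.head_cons,
      Matrix.head_fin_const, Matrix.cons_val_fin_one, Matrix.of_apply, Fin.isValue]
    simp only [pd_press ((1 : ℝ)/2*g) (hh x₀) (h22 x₀) hD hD0,
      pd_press ((1 : ℝ)/2*g) (u := fun y => -g12 y) (hh x₀) ((h12 x₀).neg) hD hD0,
      pd_press ((1 : ℝ)/2*g) (hh x₀) (h11 x₀) hD hD0, hgD, hneg]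
    simp only [gdet] at hD0 ⊢
    have hD1 : g22 x₀ * g11 x₀ - g12 x₀ ^ 2 ≠ 0 := by rwa [mul_comm]
    field_simp
    ring
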